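/- arXiv:2201.02000 — 2 statements merged into one kernel-verified Lean document; each statement's English description precedes it below -/
import Mathlib

section
/- Let n ≥ 2 and ε₁ > 0. Suppose for each prime p and each i ∈ {1,…,n} we are given a complex number α_{p,i} with |α_{p,i}| ≤ p^{1/4 - ε₁}. Define a_f(p^r) = Σ_{i=1}^n α_{p,i}^r. Then the double series Σ_{r≥2} Σ_p (log p)² |a_f(p^r)|² / p^r converges (is finite). -/
open Real Finset

set_option maxHeartbeats 1000000 in
theorem stmt_0 (n : ℕ) (hn : 2 ≤ n) (ε₁ : ℝ) (hε₁ : 0 < ε₁)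
    (α : ℕ → ℕ → ℂ)
    (hα : ∀ p : ℕ, p.Prime → ∀ i ∈ Finset.Icc 1 n, ‖α p i‖ ≤ (p : ℝ) ^ ((1:ℝ)/4 - ε₁)) :
    Summable (fun x : {r : ℕ // 2 ≤ r} × {p : ℕ // p.Prime} =>
      (Real.log x.2) ^ 2 * ‖∑ i ∈ Finset.Icc 1 n, (α x.2 i) ^ (x.1 : ℕ)‖ ^ 2
        / (x.2 : ℝ) ^ (x.1 : ℕ)) := by
  have hFsumm : Summable (fun x : {r : ℕ // 2 ≤ r} × {p : ℕ // p.Prime} =>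
      ((n:ℝ)^2 / ε₁^2) *
      ((2 * (2:ℝ) ^ (-((x.1:ℕ):ℝ)/2)) * ((x.2:ℕ):ℝ) ^ (-(1 + 2*ε₁)))) := by
    apply Summable.mul_left
    have hf : Summable (fun r : {r : ℕ // 2 ≤ r} => 2 * (2:ℝ) ^ (-((r:ℕ):ℝ)/2)) := by
      apply Summable.mul_left
      have h0 : Summable (fun r : ℕ => ((2:ℝ) ^ (-(1:ℝ)/2)) ^ r) := by
        apply summable_geometric_of_lt_one (Real.rpow_nonneg (by norm_num) _)
        exact Real.rpow_lt_one_of_one_lt_of_neg (by norm_num) (by norm_num)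
      have h := h0.subtype {r : ℕ | 2 ≤ r}
      refine h.congr fun r => ?_
      simp only [Function.comp_apply]
      rw [← Real.rpow_natCast ((2:ℝ) ^ (-(1:ℝ)/2)), ← Real.rpow_mul (by norm_num)]
      ring_nf
    have hg : Summable (fun p : {p : ℕ // p.Prime} => ((p:ℕ):ℝ) ^ (-(1 + 2*ε₁))) := by
      have h0 : Summable (fun p : ℕ => (p:ℝ) ^ (-(1 + 2*ε₁))) :=
        Real.summable_nat_rpow.mpr (by linarith)
      exact h0.subtype {p : ℕ | p.Prime}
    exact hf.mul_of_nonneg hg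
      (fun r => by positivity) (fun p => Real.rpow_nonneg (Nat.cast_nonneg _) _)
  apply Summable.of_nonneg_of_le (fun x => by positivity) _ hFsumm
  rintro ⟨⟨r, hr⟩, ⟨p, hp⟩⟩
  simp only
  have hP2 : (2:ℝ) ≤ (p:ℝ) := by exact_mod_cast hp.two_le
  have hP0 : (0:ℝ) < (p:ℝ) := by linarith
  have hP1 : (1:ℝ) ≤ (p:ℝ) := by linarith
  have hr2 : (2:ℝ) ≤ (r:ℝ) := by exact_mod_cast hr
  have hA0 : (0:ℝ) ≤ ‖∑ i ∈ Finset.Icc 1 n, (α p i) ^ r‖ := norm_nonneg _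
  -- bound on the norm of the sum
  have hAle : ‖∑ i ∈ Finset.Icc 1 n, (α p i) ^ r‖
      ≤ (n:ℝ) * (p:ℝ) ^ (((1:ℝ)/4 - ε₁) * r) := by
    calc ‖∑ i ∈ Finset.Icc 1 n, (α p i) ^ r‖
        ≤ ∑ i ∈ Finset.Icc 1 n, ‖(α p i) ^ r‖ := norm_sum_le _ _
      _ = ∑ i ∈ Finset.Icc 1 n, ‖α p i‖ ^ r := by simp [norm_pow]
      _ ≤ ∑ i ∈ Finset.Icc 1 n, ((p:ℝ) ^ ((1:ℝ)/4 - ε₁)) ^ r :=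
          Finset.sum_le_sum fun i hi => pow_le_pow_left₀ (norm_nonneg _) (hα p hp i hi) r
      _ = (n:ℝ) * ((p:ℝ) ^ ((1:ℝ)/4 - ε₁)) ^ r := by
          rw [Finset.sum_const, Nat.card_Icc]
          simp [nsmul_eq_mul]
      _ = (n:ℝ) * (p:ℝ) ^ (((1:ℝ)/4 - ε₁) * r) := by
          rw [← Real.rpow_natCast ((p:ℝ) ^ ((1:ℝ)/4 - ε₁)) r, ← Real.rpow_mul hP0.le]
  -- bound on log
  have hL0 : 0 ≤ Real.log (p:ℝ) := Real.log_nonneg hP1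
  have hLle : Real.log (p:ℝ) ≤ (p:ℝ) ^ ε₁ / ε₁ := Real.log_le_rpow_div hP0.le hε₁
  -- key exponent inequality
  have key : (p:ℝ) ^ (2*ε₁ + 2*(((1:ℝ)/4 - ε₁)*r) - r)
      ≤ 2 * (2:ℝ) ^ (-(r:ℝ)/2) * (p:ℝ) ^ (-(1 + 2*ε₁)) := by
    have hD : 2*ε₁ + 2*(((1:ℝ)/4 - ε₁)*(r:ℝ)) - r
        = (-(1 + 2*ε₁)) + (1 + 4*ε₁ - (r:ℝ)/2 - 2*ε₁*r) := by ring
    have hDneg : 1 + 4*ε₁ - (r:ℝ)/2 - 2*ε₁*r ≤ 1 - (r:ℝ)/2 := by nlinarith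
    have hD0 : 1 + 4*ε₁ - (r:ℝ)/2 - 2*ε₁*r ≤ 0 := by linarith
    have h1 : (p:ℝ) ^ (1 + 4*ε₁ - (r:ℝ)/2 - 2*ε₁*r)
        ≤ (2:ℝ) ^ (1 + 4*ε₁ - (r:ℝ)/2 - 2*ε₁*r) := by
      rw [← neg_neg (1 + 4*ε₁ - (r:ℝ)/2 - 2*ε₁*r), Real.rpow_neg hP0.le,
        Real.rpow_neg (by norm_num : (0:ℝ) ≤ 2)]
      exact inv_anti₀ (Real.rpow_pos_of_pos (by norm_num) _)
        (Real.rpow_le_rpow (by norm_num) hP2 (by linarith))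
    have h2 : (2:ℝ) ^ (1 + 4*ε₁ - (r:ℝ)/2 - 2*ε₁*r) ≤ (2:ℝ) ^ (1 - (r:ℝ)/2) :=
      Real.rpow_le_rpow_of_exponent_le (by norm_num) hDneg
    have h3 : (2:ℝ) ^ (1 - (r:ℝ)/2) = 2 * (2:ℝ) ^ (-(r:ℝ)/2) := by
      rw [show (1 : ℝ) - (r:ℝ)/2 = 1 + (-(r:ℝ)/2) by ring,
        Real.rpow_add (by norm_num), Real.rpow_one]
    calc (p:ℝ) ^ (2*ε₁ + 2*(((1:ℝ)/4 - ε₁)*r) - r)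
        = (p:ℝ) ^ (-(1 + 2*ε₁)) * (p:ℝ) ^ (1 + 4*ε₁ - (r:ℝ)/2 - 2*ε₁*r) := by
          rw [← Real.rpow_add hP0, ← hD]
      _ ≤ (p:ℝ) ^ (-(1 + 2*ε₁)) * (2 * (2:ℝ) ^ (-(r:ℝ)/2)) := by
          rw [← h3]
          exact mul_le_mul_of_nonneg_left (h1.trans h2) (Real.rpow_nonneg hP0.le _)
      _ = 2 * (2:ℝ) ^ (-(r:ℝ)/2) * (p:ℝ) ^ (-(1 + 2*ε₁)) := by ring
  -- combine
  calc (Real.log (p:ℝ)) ^ 2 * ‖∑ i ∈ Finset.Icc 1 n, (α p i) ^ r‖ ^ 2 / (p:ℝ) ^ r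
      ≤ ((p:ℝ) ^ ε₁ / ε₁) ^ 2 * ((n:ℝ) * (p:ℝ) ^ (((1:ℝ)/4 - ε₁) * r)) ^ 2 / (p:ℝ) ^ r := by
        gcongr
    _ = ((n:ℝ)^2 / ε₁^2) * (p:ℝ) ^ (2*ε₁ + 2*(((1:ℝ)/4 - ε₁)*r) - r) := by
        have sq : ∀ e : ℝ, ((p:ℝ) ^ e)^2 = (p:ℝ) ^ (e*2) := fun e => by
          rw [← Real.rpow_natCast ((p:ℝ)^e) 2, ← Real.rpow_mul hP0.le]; norm_num
        rw [div_pow, mul_pow, sq, sq, ← Real.rpow_natCast (p:ℝ) r,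
          show (2*ε₁ + 2*(((1:ℝ)/4 - ε₁)*(r:ℝ)) - (r:ℝ))
            = (ε₁*2 + (((1:ℝ)/4 - ε₁)*(r:ℝ))*2) - (r:ℝ) by ring,
          Real.rpow_sub hP0, Real.rpow_add hP0]
        field_simp
    _ ≤ ((n:ℝ)^2 / ε₁^2) * (2 * (2:ℝ) ^ (-(r:ℝ)/2) * (p:ℝ) ^ (-(1 + 2*ε₁))) :=
        mul_le_mul_of_nonneg_left key (by positivity)
end

section
/- Let A > 0 and let (γ_k)_{k∈ℕ} be a sequence of real numbers such that for every integer m ≥ 1, the number of indices k with m−1 ≤ |γ_k| ≤ m is at most A·log(t + m) for a fixed t ≥ 2. Then for any A₂ > 0, Σ_k e^{-A₂||t| − |γ_k||} ≪ log t, with implied constant depending only on A and A₂. -/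
open Real

/-- Auxiliary: a finset sum of `exp (-a * |m - t|)` over naturals is uniformly bounded. -/
lemma aux_sum_exp_abs {a t : ℝ} (ha : 0 < a) (ht : 0 ≤ t) (s : Finset ℕ) :
    ∑ m ∈ s, Real.exp (-a * |(m : ℝ) - t|) ≤ 2 * (1 - Real.exp (-a))⁻¹ := by
  classical
  set r := Real.exp (-a) with hrdef
  have hr0 : 0 ≤ r := (Real.exp_pos _).le
  have hr1 : r < 1 := Real.exp_lt_one_iff.mpr (by linarith)
  have hsum : Summable fun j : ℕ => r ^ j := summable_geometric_of_lt_one hr0 hr1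
  have htsum : ∑' j : ℕ, r ^ j = (1 - r)⁻¹ := tsum_geometric_of_lt_one hr0 hr1
  have hpow : ∀ k : ℕ, Real.exp (-a * (k : ℝ)) = r ^ k := by
    intro k
    rw [hrdef, ← Real.exp_nat_mul]
    ring_nf
  have key : ∀ (u : Finset ℕ) (φ : ℕ → ℕ), (∀ x ∈ u, ∀ y ∈ u, φ x = φ y → x = y) →
      (∀ m ∈ u, ((φ m : ℝ)) ≤ |(m : ℝ) - t|) →
      ∑ m ∈ u, Real.exp (-a * |(m : ℝ) - t|) ≤ (1 - r)⁻¹ := by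
    intro u φ hinj hle
    calc ∑ m ∈ u, Real.exp (-a * |(m : ℝ) - t|)
        ≤ ∑ m ∈ u, r ^ (φ m) := by
          refine Finset.sum_le_sum fun m hm => ?_
          rw [← hpow]
          apply Real.exp_le_exp.mpr
          nlinarith [hle m hm]
      _ = ∑ j ∈ u.image φ, r ^ j := (Finset.sum_image hinj).symm
      _ ≤ ∑' j : ℕ, r ^ j := Summable.sum_le_tsum _ (fun j _ => pow_nonneg hr0 j) hsum
      _ = (1 - r)⁻¹ := htsum
  set n := ⌊t⌋₊ with hndef
  have hnt : (n : ℝ) ≤ t := Nat.floor_le ht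
  have htn : t < (n : ℝ) + 1 := Nat.lt_floor_add_one t
  rw [← Finset.sum_filter_add_sum_filter_not s (fun m => m ≤ n)]
  have h1 : ∑ m ∈ s.filter (fun m => m ≤ n), Real.exp (-a * |(m : ℝ) - t|) ≤ (1 - r)⁻¹ := by
    apply key _ (fun m => n - m)
    · intro x hx y hy hxy
      have hx' : x ≤ n := (Finset.mem_filter.mp hx).2
      have hy' : y ≤ n := (Finset.mem_filter.mp hy).2
      omega
    · intro m hm
      have hm' : m ≤ n := (Finset.mem_filter.mp hm).2
      have hcast : ((n - m : ℕ) : ℝ) = (n : ℝ) - m := by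
        rw [Nat.cast_sub hm']
      have hmn : (m : ℝ) ≤ (n : ℝ) := Nat.cast_le.mpr hm'
      have : t - (m : ℝ) ≤ |(m : ℝ) - t| := by
        rw [abs_sub_comm]
        exact le_abs_self _
      linarith [hcast, hmn, hnt, this]
  have h2 : ∑ m ∈ s.filter (fun m => ¬ m ≤ n), Real.exp (-a * |(m : ℝ) - t|) ≤ (1 - r)⁻¹ := by
    apply key _ (fun m => m - (n + 1))
    · intro x hx y hy hxy
      have hx' : ¬ x ≤ n := (Finset.mem_filter.mp hx).2
      have hy' : ¬ y ≤ n := (Finset.mem_filter.mp hy).2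
      omega
    · intro m hm
      have hm' : ¬ m ≤ n := (Finset.mem_filter.mp hm).2
      have hm'' : n + 1 ≤ m := by omega
      have hcast : ((m - (n + 1) : ℕ) : ℝ) = (m : ℝ) - ((n : ℝ) + 1) := by
        rw [Nat.cast_sub hm'']
        push_cast
        ring
      have : (m : ℝ) - t ≤ |(m : ℝ) - t| := le_abs_self _
      linarith [hcast, this, htn]
  linarith [h1, h2]

theorem stmt_13 (A A₂ : ℝ) (hA : 0 < A) (hA₂ : 0 < A₂) :
    ∃ C : ℝ, ∀ t : ℝ, 2 ≤ t → ∀ γ : ℕ → ℝ,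
      (∀ m : ℕ, 1 ≤ m →
        ({k : ℕ | (m : ℝ) - 1 ≤ |γ k| ∧ |γ k| ≤ (m : ℝ)}).Finite ∧
        (Nat.card {k : ℕ | (m : ℝ) - 1 ≤ |γ k| ∧ |γ k| ≤ (m : ℝ)} : ℝ)
          ≤ A * Real.log (t + m)) →
      Summable (fun k : ℕ => Real.exp (-A₂ * |(|t| - |γ k|)|)) ∧
      (∑' k : ℕ, Real.exp (-A₂ * |(|t| - |γ k|)|)) ≤ C * Real.log t := by
  classical
  set E := Real.exp A₂ with hE
  set K := A * E * (2 + 2 / (A₂ * Real.log 2)) with hKdef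
  refine ⟨K * (2 * (1 - Real.exp (-(A₂ / 2)))⁻¹), ?_⟩
  intro t ht γ H
  have ht0 : (0 : ℝ) < t := by linarith
  have hlog2 : (0 : ℝ) < Real.log 2 := Real.log_pos (by norm_num)
  have hlogt : Real.log 2 ≤ Real.log t := Real.log_le_log (by norm_num) ht
  have hlogt0 : 0 < Real.log t := lt_of_lt_of_le hlog2 hlogt
  have hE0 : 0 < E := Real.exp_pos _
  have hK0 : 0 < K := by
    rw [hKdef]
    positivity
  have habs : |t| = t := abs_of_nonneg ht0.le
  set f : ℕ → ℝ := fun k => Real.exp (-A₂ * |(|t| - |γ k|)|) with hfdef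
  have hf0 : ∀ k, 0 ≤ f k := fun k => (Real.exp_pos _).le
  set h : ℕ → ℕ := fun k => max 1 ⌈|γ k|⌉₊ with hhdef
  have hh1 : ∀ k, 1 ≤ h k := fun k => le_max_left _ _
  have hmem : ∀ k, ((h k : ℝ) - 1 ≤ |γ k| ∧ |γ k| ≤ (h k : ℝ)) := by
    intro k
    rcases Nat.eq_zero_or_pos ⌈|γ k|⌉₊ with h0 | h0
    · have hle : |γ k| ≤ 0 := Nat.ceil_eq_zero.mp h0
      have hγ : |γ k| = 0 := le_antisymm hle (abs_nonneg _)
      simp [hhdef, h0, hγ]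
    · have hmax : h k = ⌈|γ k|⌉₊ := max_eq_right h0
      constructor
      · rw [hmax]
        have := Nat.ceil_lt_add_one (abs_nonneg (γ k))
        linarith
      · rw [hmax]; exact Nat.le_ceil _
  -- Main finset bound
  have main : ∀ s : Finset ℕ, ∑ k ∈ s, f k ≤ K * (2 * (1 - Real.exp (-(A₂ / 2)))⁻¹) * Real.log t := by
    intro s
    rw [← Finset.sum_fiberwise_of_maps_to (fun k hk => Finset.mem_image_of_mem h hk) f]
    have perm : ∀ m ∈ s.image h, ∑ k ∈ s.filter (fun k => h k = m), f k
        ≤ K * Real.log t * Real.exp (-(A₂ / 2) * |(m : ℝ) - t|) := by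
      intro m hm
      obtain ⟨k₀, hk₀s, hk₀⟩ := Finset.mem_image.mp hm
      have hm1 : 1 ≤ m := hk₀ ▸ hh1 k₀
      obtain ⟨hfin, hcard⟩ := H m hm1
      set x := |(m : ℝ) - t| with hxdef
      have hx0 : 0 ≤ x := abs_nonneg _
      -- pointwise bound on the fiber
      have hpt : ∀ k ∈ s.filter (fun k => h k = m), f k ≤ E * Real.exp (-A₂ * x) := by
        intro k hk
        have hkm : h k = m := (Finset.mem_filter.mp hk).2
        obtain ⟨hl, hr⟩ := hmem k
        rw [hkm] at hl hr
        have e1 : |(m : ℝ) - t| ≤ |(t - |γ k|)| + 1 := by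
          have t1 : |(m : ℝ) - t| ≤ |((m : ℝ) - |γ k|)| + |(|γ k| - t)| := abs_sub_le _ _ _
          have t2 : |((m : ℝ) - |γ k|)| ≤ 1 := abs_le.mpr ⟨by linarith, by linarith⟩
          have t3 : |(|γ k| - t)| = |(t - |γ k|)| := abs_sub_comm _ _
          linarith
        have : f k = Real.exp (-A₂ * |(t - |γ k|)|) := by
          rw [hfdef]; simp only [habs]
        rw [this, hE, ← Real.exp_add]
        apply Real.exp_le_exp.mpr
        rw [hxdef] at *
        nlinarith [e1, hA₂]
      -- count bound on the fiber
      have hsub : s.filter (fun k => h k = m) ⊆ hfin.toFinset := by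
        intro k hk
        have hkm : h k = m := (Finset.mem_filter.mp hk).2
        rw [Set.Finite.mem_toFinset]
        have := hmem k
        rw [hkm] at this
        exact this
      have hcard' : ((s.filter (fun k => h k = m)).card : ℝ) ≤ A * Real.log (t + m) := by
        have h1 : (s.filter (fun k => h k = m)).card ≤ hfin.toFinset.card :=
          Finset.card_le_card hsub
        have h2 : Nat.card {k : ℕ | (m : ℝ) - 1 ≤ |γ k| ∧ |γ k| ≤ (m : ℝ)}
            = hfin.toFinset.card := Nat.card_eq_card_finite_toFinset hfin
        calc ((s.filter (fun k => h k = m)).card : ℝ) ≤ (hfin.toFinset.card : ℝ) := by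
              exact_mod_cast h1
          _ = (Nat.card {k : ℕ | (m : ℝ) - 1 ≤ |γ k| ∧ |γ k| ≤ (m : ℝ)} : ℝ) := by rw [h2]
          _ ≤ A * Real.log (t + m) := hcard
      -- log bound
      have hm0 : (0 : ℝ) ≤ (m : ℝ) := Nat.cast_nonneg m
      have hlog_le : Real.log (t + m) ≤ 2 * Real.log t + x := by
        have hmx : (m : ℝ) ≤ t + x := by
          have := le_abs_self ((m : ℝ) - t)
          rw [← hxdef] at this
          linarith
        have harg : t + (m : ℝ) ≤ 2 * t * (1 + x) := by nlinarith
        have hpos : (0 : ℝ) < t + m := by linarith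
        calc Real.log (t + m) ≤ Real.log (2 * t * (1 + x)) := Real.log_le_log hpos harg
          _ = Real.log (2 * t) + Real.log (1 + x) := by
              rw [Real.log_mul (by positivity) (by positivity)]
          _ = Real.log 2 + Real.log t + Real.log (1 + x) := by
              rw [Real.log_mul (by norm_num) (by positivity)]
          _ ≤ 2 * Real.log t + x := by
              have := Real.log_le_sub_one_of_pos (show (0 : ℝ) < 1 + x by linarith)
              linarith
      -- exp decay manipulations
      have hxe : x * Real.exp (-A₂ * x) ≤ (2 / A₂) * Real.exp (-(A₂ / 2) * x) := by
        have h3 : (A₂ / 2) * x ≤ Real.exp ((A₂ / 2) * x) := by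
          have := Real.add_one_le_exp ((A₂ / 2) * x)
          linarith
        have h2' : x ≤ (2 / A₂) * Real.exp ((A₂ / 2) * x) := by
          have heq : x = (2 / A₂) * ((A₂ / 2) * x) := by field_simp
          calc x = (2 / A₂) * ((A₂ / 2) * x) := heq
            _ ≤ (2 / A₂) * Real.exp ((A₂ / 2) * x) :=
                mul_le_mul_of_nonneg_left h3 (by positivity)
        calc x * Real.exp (-A₂ * x)
            ≤ ((2 / A₂) * Real.exp ((A₂ / 2) * x)) * Real.exp (-A₂ * x) :=
              mul_le_mul_of_nonneg_right h2' (Real.exp_pos _).le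
          _ = (2 / A₂) * Real.exp (-(A₂ / 2) * x) := by
              rw [mul_assoc, ← Real.exp_add]
              ring_nf
      have hee : Real.exp (-A₂ * x) ≤ Real.exp (-(A₂ / 2) * x) := by
        apply Real.exp_le_exp.mpr
        nlinarith
      have hfrac : (2 / A₂) ≤ 2 / (A₂ * Real.log 2) * Real.log t := by
        have heq : 2 / (A₂ * Real.log 2) * Real.log 2 = 2 / A₂ := by
          field_simp
        calc (2 / A₂) = 2 / (A₂ * Real.log 2) * Real.log 2 := heq.symm
          _ ≤ 2 / (A₂ * Real.log 2) * Real.log t :=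
              mul_le_mul_of_nonneg_left hlogt (by positivity)
      calc ∑ k ∈ s.filter (fun k => h k = m), f k
          ≤ (s.filter (fun k => h k = m)).card • (E * Real.exp (-A₂ * x)) :=
            Finset.sum_le_card_nsmul _ _ _ hpt
        _ = ((s.filter (fun k => h k = m)).card : ℝ) * (E * Real.exp (-A₂ * x)) := by
            rw [nsmul_eq_mul]
        _ ≤ (A * Real.log (t + m)) * (E * Real.exp (-A₂ * x)) :=
            mul_le_mul_of_nonneg_right hcard' (by positivity)
        _ ≤ (A * (2 * Real.log t + x)) * (E * Real.exp (-A₂ * x)) :=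
            mul_le_mul_of_nonneg_right
              (mul_le_mul_of_nonneg_left hlog_le hA.le) (by positivity)
        _ = (2 * A * E * Real.log t) * Real.exp (-A₂ * x)
              + (A * E) * (x * Real.exp (-A₂ * x)) := by ring
        _ ≤ (2 * A * E * Real.log t) * Real.exp (-(A₂ / 2) * x)
              + (A * E) * ((2 / A₂) * Real.exp (-(A₂ / 2) * x)) := by
            apply add_le_add
            · exact mul_le_mul_of_nonneg_left hee (by positivity)
            · exact mul_le_mul_of_nonneg_left hxe (by positivity)
        _ ≤ (2 * A * E * Real.log t) * Real.exp (-(A₂ / 2) * x)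
              + (A * E) * ((2 / (A₂ * Real.log 2) * Real.log t) * Real.exp (-(A₂ / 2) * x)) := by
            apply add_le_add (le_refl _)
            apply mul_le_mul_of_nonneg_left _ (by positivity)
            exact mul_le_mul_of_nonneg_right hfrac (Real.exp_pos _).le
        _ = K * Real.log t * Real.exp (-(A₂ / 2) * x) := by
            rw [hKdef]; ring
    calc ∑ m ∈ s.image h, ∑ k ∈ s.filter (fun k => h k = m), f k
        ≤ ∑ m ∈ s.image h, K * Real.log t * Real.exp (-(A₂ / 2) * |(m : ℝ) - t|) :=
          Finset.sum_le_sum perm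
      _ = K * Real.log t * ∑ m ∈ s.image h, Real.exp (-(A₂ / 2) * |(m : ℝ) - t|) := by
          rw [Finset.mul_sum]
      _ ≤ K * Real.log t * (2 * (1 - Real.exp (-(A₂ / 2)))⁻¹) := by
          apply mul_le_mul_of_nonneg_left _ (by positivity)
          exact aux_sum_exp_abs (by linarith) ht0.le _
      _ = K * (2 * (1 - Real.exp (-(A₂ / 2)))⁻¹) * Real.log t := by ring
  have hsummable : Summable f := summable_of_sum_le (fun k => hf0 k) main
  exact ⟨hsummable, Summable.tsum_le_of_sum_le hsummable main⟩
end
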